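/- (Additional power, full-rank-above-threshold case.) Under the hypotheses of the additional-power theorem with K = s, i.e., Σ, Σ̂ real symmetric positive semidefinite n×n, Σ of rank s ≥ 1 with eigenvalues λ₁ ≥ ⋯ ≥ λ_s ≥ χ > 0 and λ_k = 0 for k > s, δ₀ := ‖Σ̂ − Σ‖ ≤ χ/4^{s+1}, δ_s = 4^s·δ₀, P_ideal = Σ_{k=1}^{s} σ²(1/χ − 1/λ_k) and P_mismatch = Σ_{k ≤ s, λ̂_k > χ − δ_s} σ²(1/(χ − δ_s) − 1/λ̂_k), where λ̂₁ ≥ ⋯ ≥ λ̂_n are the eigenvalues of Σ̂, one has P_mismatch < P_ideal + (323/816)·(σ²/χ)·s. -/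

import Mathlib

open MeasureTheory ProbabilityTheory Matrix BigOperators

/-- Spectral (ℓ²-operator) norm of a real square matrix. -/
noncomputable def specNorm {n : ℕ} (A : Matrix (Fin n) (Fin n) ℝ) : ℝ :=
  ‖LinearMap.toContinuousLinearMap (Matrix.toEuclideanLin A)‖

open scoped RealInnerProductSpace

section WeylAux
variable {n : ℕ}

lemma stmt10_toEuclideanLin_eigen {A : Matrix (Fin n) (Fin n) ℝ} (hA : A.IsHermitian) (i : Fin n) :
    Matrix.toEuclideanLin A (hA.eigenvectorBasis i) =
      hA.eigenvalues i • hA.eigenvectorBasis i := by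
  have h := hA.mulVec_eigenvectorBasis i
  ext j
  have h2 := congrFun h j
  simpa [Matrix.toEuclideanLin_apply] using h2

lemma stmt10_quad_form_eq {A : Matrix (Fin n) (Fin n) ℝ} (hA : A.IsHermitian)
    (x : EuclideanSpace ℝ (Fin n)) :
    ⟪x, Matrix.toEuclideanLin A x⟫ =
      ∑ i, hA.eigenvalues i * ⟪hA.eigenvectorBasis i, x⟫ ^ 2 := by
  have hsym : (Matrix.toEuclideanLin A).IsSymmetric :=
    (Matrix.isHermitian_iff_isSymmetric).1 hA
  have h1 := (hA.eigenvectorBasis.sum_inner_mul_inner x (Matrix.toEuclideanLin A x)).symm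
  rw [h1]
  refine Finset.sum_congr rfl fun i _ => ?_
  have h2 : ⟪hA.eigenvectorBasis i, Matrix.toEuclideanLin A x⟫
      = hA.eigenvalues i * ⟪hA.eigenvectorBasis i, x⟫ := by
    rw [← hsym (hA.eigenvectorBasis i) x, stmt10_toEuclideanLin_eigen hA i,
      real_inner_smul_left]
  rw [h2, real_inner_comm x]
  ring

lemma stmt10_parseval (v : OrthonormalBasis (Fin n) ℝ (EuclideanSpace ℝ (Fin n)))
    (x : EuclideanSpace ℝ (Fin n)) :
    ‖x‖ ^ 2 = ∑ i, ⟪v i, x⟫ ^ 2 := by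
  have h1 := v.sum_inner_mul_inner x x
  rw [real_inner_self_eq_norm_sq] at h1
  rw [← h1]
  refine Finset.sum_congr rfl fun i _ => ?_
  rw [real_inner_comm x]
  ring

lemma stmt10_coeff_zero_of_mem_span (v : OrthonormalBasis (Fin n) ℝ (EuclideanSpace ℝ (Fin n)))
    (T : Finset (Fin n)) {x : EuclideanSpace ℝ (Fin n)}
    (hx : x ∈ Submodule.span ℝ (v '' T)) {i : Fin n} (hi : i ∉ T) :
    ⟪v i, x⟫ = 0 := by
  induction hx using Submodule.span_induction with
  | mem y hy =>
    obtain ⟨j, hj, rfl⟩ := hy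
    exact v.orthonormal.2 (fun h : i = j => hi (h ▸ hj))
  | zero => exact inner_zero_right _
  | add y z _ _ hy hz => rw [inner_add_right, hy, hz]; ring
  | smul a y _ hy => rw [real_inner_smul_right, hy]; ring

lemma stmt10_finrank_span_orthonormal
    (v : OrthonormalBasis (Fin n) ℝ (EuclideanSpace ℝ (Fin n))) (T : Finset (Fin n)) :
    Module.finrank ℝ (Submodule.span ℝ (v '' T)) = T.card := by
  have h1 : LinearIndependent ℝ (fun i : (T : Set (Fin n)) => v i) :=
    v.orthonormal.linearIndependent.comp _ Subtype.val_injective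
  have h2 := finrank_span_eq_card h1
  rw [show Set.range (fun i : (T : Set (Fin n)) => v i) = v '' T by
      rw [← Set.image_eq_range]] at h2
  simpa using h2

/-- Weyl's inequality (upper form) for sorted eigenvalue enumerations. -/
lemma stmt10_weyl_upper (A B : Matrix (Fin n) (Fin n) ℝ)
    (hA : A.IsHermitian) (hB : B.IsHermitian)
    (a : Fin n → ℝ) (ha : Antitone a)
    (ea : Equiv.Perm (Fin n)) (haa : ∀ i, a i = hA.eigenvalues (ea i))
    (b : Fin n → ℝ) (hb : Antitone b)
    (eb : Equiv.Perm (Fin n)) (hbb : ∀ i, b i = hB.eigenvalues (eb i))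
    (k : Fin n) :
    b k ≤ a k + specNorm (B - A) := by
  classical
  set vA := hA.eigenvectorBasis with hvA
  set vB := hB.eigenvectorBasis with hvB
  set TB : Finset (Fin n) := (Finset.Iic k).image eb with hTB
  set TA : Finset (Fin n) := (Finset.Ici k).image ea with hTA
  set V := Submodule.span ℝ (vB '' TB) with hV
  set W := Submodule.span ℝ (vA '' TA) with hW
  have hcardB : TB.card = (k : ℕ) + 1 := by
    rw [hTB, Finset.card_image_of_injective _ eb.injective, Fin.card_Iic]
  have hcardA : TA.card = n - (k : ℕ) := by
    rw [hTA, Finset.card_image_of_injective _ ea.injective, Fin.card_Ici]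
  have hdimV : Module.finrank ℝ V = (k : ℕ) + 1 := by
    rw [hV, stmt10_finrank_span_orthonormal, hcardB]
  have hdimW : Module.finrank ℝ W = n - (k : ℕ) := by
    rw [hW, stmt10_finrank_span_orthonormal, hcardA]
  have hsum := Submodule.finrank_sup_add_finrank_inf_eq V W
  have hle : Module.finrank ℝ ↥(V ⊔ W) ≤ n := by
    have := Submodule.finrank_le (V ⊔ W)
    simpa [finrank_euclideanSpace_fin] using this
  have hpos : 0 < Module.finrank ℝ ↥(V ⊓ W) := by
    have hkn : (k : ℕ) < n := k.isLt
    omega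
  obtain ⟨x, hx0⟩ := Module.finrank_pos_iff_exists_ne_zero.mp hpos
  have hxV : (x : EuclideanSpace ℝ (Fin n)) ∈ V := x.2.1
  have hxW : (x : EuclideanSpace ℝ (Fin n)) ∈ W := x.2.2
  have hxne : (x : EuclideanSpace ℝ (Fin n)) ≠ 0 := by
    simpa [Submodule.coe_eq_zero] using hx0
  set y : EuclideanSpace ℝ (Fin n) := (x : EuclideanSpace ℝ (Fin n)) with hy
  have hny : 0 < ‖y‖ ^ 2 := pow_pos (norm_pos_iff.mpr hxne) 2
  have hBlow : b k * ‖y‖ ^ 2 ≤ ⟪y, Matrix.toEuclideanLin B y⟫ := by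
    rw [stmt10_quad_form_eq hB y, stmt10_parseval vB y, Finset.mul_sum]
    refine Finset.sum_le_sum fun i _ => ?_
    by_cases hi : i ∈ TB
    · obtain ⟨j, hj, rfl⟩ := Finset.mem_image.mp hi
      have hj' : j ≤ k := Finset.mem_Iic.mp hj
      have : b k ≤ hB.eigenvalues (eb j) := by rw [← hbb j]; exact hb hj'
      exact mul_le_mul_of_nonneg_right this (sq_nonneg _)
    · rw [stmt10_coeff_zero_of_mem_span vB TB hxV hi]
      simp
  have hAup : ⟪y, Matrix.toEuclideanLin A y⟫ ≤ a k * ‖y‖ ^ 2 := by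
    rw [stmt10_quad_form_eq hA y, stmt10_parseval vA y, Finset.mul_sum]
    refine Finset.sum_le_sum fun i _ => ?_
    by_cases hi : i ∈ TA
    · obtain ⟨j, hj, rfl⟩ := Finset.mem_image.mp hi
      have hj' : k ≤ j := Finset.mem_Ici.mp hj
      have : hA.eigenvalues (ea j) ≤ a k := by rw [← haa j]; exact ha hj'
      exact mul_le_mul_of_nonneg_right this (sq_nonneg _)
    · rw [stmt10_coeff_zero_of_mem_span vA TA hxW hi]
      simp
  have hE : ⟪y, Matrix.toEuclideanLin (B - A) y⟫ ≤ specNorm (B - A) * ‖y‖ ^ 2 := by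
    have h1 : ⟪y, Matrix.toEuclideanLin (B - A) y⟫ ≤ ‖y‖ * ‖Matrix.toEuclideanLin (B - A) y‖ :=
      real_inner_le_norm _ _
    have h2 : ‖Matrix.toEuclideanLin (B - A) y‖ ≤ specNorm (B - A) * ‖y‖ :=
      (LinearMap.toContinuousLinearMap (Matrix.toEuclideanLin (B - A))).le_opNorm y
    nlinarith [norm_nonneg y, norm_nonneg (Matrix.toEuclideanLin (B - A) y)]
  have hsplit : ⟪y, Matrix.toEuclideanLin B y⟫ =
      ⟪y, Matrix.toEuclideanLin A y⟫ + ⟪y, Matrix.toEuclideanLin (B - A) y⟫ := by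
    rw [map_sub]
    simp [inner_sub_right]
  have hfinal : b k * ‖y‖ ^ 2 ≤ (a k + specNorm (B - A)) * ‖y‖ ^ 2 := by
    calc b k * ‖y‖ ^ 2 ≤ ⟪y, Matrix.toEuclideanLin B y⟫ := hBlow
      _ = ⟪y, Matrix.toEuclideanLin A y⟫ + ⟪y, Matrix.toEuclideanLin (B - A) y⟫ := hsplit
      _ ≤ a k * ‖y‖ ^ 2 + specNorm (B - A) * ‖y‖ ^ 2 := add_le_add hAup hE
      _ = (a k + specNorm (B - A)) * ‖y‖ ^ 2 := by ring
  exact le_of_mul_le_mul_right hfinal hny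

end WeylAux

lemma stmt10_key_ineq (σ χ δ0 δs lam lamhat : ℝ) (hσ : 0 < σ) (hχ : 0 < χ)
    (hδ016 : δ0 ≤ χ / 16) (hδs0 : 0 ≤ δs) (hδs4 : δs ≤ χ / 4)
    (hlam : χ ≤ lam) (hhatub : lamhat ≤ lam + δ0) (hhatlb : χ - δs < lamhat) :
    σ ^ 2 * (1 / (χ - δs) - 1 / lamhat) <
      σ ^ 2 * (1 / χ - 1 / lam) + 19 / 48 * (σ ^ 2 / χ) := by
  have h34 : 3 * χ / 4 ≤ χ - δs := by linarith
  have hχs : 0 < χ - δs := lt_of_lt_of_le (by linarith) h34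
  have hlamhat0 : 0 < lamhat := lt_trans hχs hhatlb
  have hlam0 : 0 < lam := lt_of_lt_of_le hχ hlam
  have p1 : 1 / (χ - δs) - 1 / χ ≤ 1 / (3 * χ) := by
    have h1 : 1 / (χ - δs) ≤ 4 / (3 * χ) := by
      rw [div_le_div_iff₀ hχs (by linarith : (0:ℝ) < 3 * χ)]
      linarith
    have h2 : 4 / (3 * χ) - 1 / χ = 1 / (3 * χ) := by
      field_simp
      ring
    linarith
  have p2 : 1 / lam - 1 / lamhat < 1 / (16 * χ) := by
    rcases le_or_gt lamhat lam with h | h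
    · have h1 : 1 / lam ≤ 1 / lamhat := one_div_le_one_div_of_le hlamhat0 h
      have h2 : 0 < 1 / (16 * χ) := by positivity
      linarith
    · have hδ0pos : 0 < δ0 := by linarith
      have heq : 1 / lam - 1 / lamhat = (lamhat - lam) / (lam * lamhat) := by
        field_simp
      have hd : χ * χ < lam * lamhat := by nlinarith
      rw [heq]
      calc (lamhat - lam) / (lam * lamhat) ≤ δ0 / (lam * lamhat) := by
            gcongr
            linarith
        _ < δ0 / (χ * χ) := div_lt_div_of_pos_left hδ0pos (by positivity) hd
        _ ≤ 1 / (16 * χ) := by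
            rw [div_le_div_iff₀ (by positivity) (by positivity)]
            nlinarith
  have h3 : 1 / (3 * χ) + 1 / (16 * χ) = 19 / 48 * (1 / χ) := by
    field_simp
    ring
  have core : 1 / (χ - δs) - 1 / lamhat < 1 / χ - 1 / lam + 19 / 48 * (1 / χ) := by
    linarith
  calc σ ^ 2 * (1 / (χ - δs) - 1 / lamhat)
      < σ ^ 2 * (1 / χ - 1 / lam + 19 / 48 * (1 / χ)) :=
        mul_lt_mul_of_pos_left core (by positivity)
    _ = σ ^ 2 * (1 / χ - 1 / lam) + 19 / 48 * (σ ^ 2 / χ) := by ring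

/-- Additional power, full-rank-above-threshold case `K = s`. -/
theorem stmt10 {n s : ℕ} (hs : 1 ≤ s)
    (σ χ : ℝ) (hσ : 0 < σ) (hχ : 0 < χ)
    (S Shat : Matrix (Fin n) (Fin n) ℝ) (hS : S.PosSemidef) (hShat : Shat.PosSemidef)
    (hrank : S.rank = s)
    -- `lam` enumerates the eigenvalues of `S` in decreasing order
    (lam : Fin n → ℝ) (hlam_anti : Antitone lam)
    (hlam_eig : ∃ e : Equiv.Perm (Fin n), ∀ i, lam i = hS.1.eigenvalues (e i))
    -- `lamhat` enumerates the eigenvalues of `Shat` in decreasing order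
    (lamhat : Fin n → ℝ) (hlamhat_anti : Antitone lamhat)
    (hlamhat_eig : ∃ e : Equiv.Perm (Fin n), ∀ i, lamhat i = hShat.1.eigenvalues (e i))
    -- the first s eigenvalues are ≥ χ, the rest vanish
    (habove : ∀ k : Fin n, (k : ℕ) < s → χ ≤ lam k)
    (hzero : ∀ k : Fin n, s ≤ (k : ℕ) → lam k = 0)
    (δ0 δs : ℝ) (hδ0 : δ0 = specNorm (Shat - S)) (hδ0small : δ0 ≤ χ / 4 ^ (s + 1))
    (hδs : δs = 4 ^ s * δ0)
    (Pideal Pmismatch : ℝ)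
    (hPideal : Pideal = ∑ k ∈ Finset.univ.filter (fun k : Fin n => (k : ℕ) < s),
      σ ^ 2 * (1 / χ - 1 / lam k))
    (hPmismatch : Pmismatch = ∑ k ∈ Finset.univ.filter
        (fun k : Fin n => (k : ℕ) < s ∧ χ - δs < lamhat k),
      σ ^ 2 * (1 / (χ - δs) - 1 / lamhat k)) :
    Pmismatch < Pideal + (323 / 816) * (σ ^ 2 / χ) * s := by
  classical
  obtain ⟨ea, hea⟩ := hlam_eig
  obtain ⟨eb, heb⟩ := hlamhat_eig
  have hδ0nn : 0 ≤ δ0 := by rw [hδ0]; exact norm_nonneg _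
  have h16 : (16 : ℝ) ≤ 4 ^ (s + 1) := by
    calc (16 : ℝ) = 4 ^ 2 := by norm_num
      _ ≤ 4 ^ (s + 1) := by
          apply pow_le_pow_right₀ (by norm_num)
          omega
  have hδ016 : δ0 ≤ χ / 16 := by
    refine le_trans hδ0small ?_
    rw [div_le_div_iff₀ (by positivity) (by norm_num)]
    nlinarith
  have hδs0 : 0 ≤ δs := by rw [hδs]; positivity
  have hδs4 : δs ≤ χ / 4 := by
    have h1 : (4 : ℝ) ^ s * (χ / 4 ^ (s + 1)) = χ / 4 := by
      rw [pow_succ]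
      field_simp
    calc δs = 4 ^ s * δ0 := hδs
      _ ≤ 4 ^ s * (χ / 4 ^ (s + 1)) := by
          apply mul_le_mul_of_nonneg_left hδ0small (by positivity)
      _ = χ / 4 := h1
  have hweyl : ∀ k : Fin n, lamhat k ≤ lam k + δ0 := fun k => by
    have := stmt10_weyl_upper S Shat hS.1 hShat.1 lam hlam_anti ea hea
      lamhat hlamhat_anti eb heb k
    rw [hδ0]
    exact this
  set F := Finset.univ.filter (fun k : Fin n => (k : ℕ) < s ∧ χ - δs < lamhat k) with hF
  set Fs := Finset.univ.filter (fun k : Fin n => (k : ℕ) < s) with hFs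
  have hFsub : F ⊆ Fs := by
    intro k hk
    simp only [hF, hFs, Finset.mem_filter, Finset.mem_univ, true_and] at hk ⊢
    exact hk.1
  have hIdealnn : ∀ k ∈ Fs, 0 ≤ σ ^ 2 * (1 / χ - 1 / lam k) := by
    intro k hk
    simp only [hFs, Finset.mem_filter, Finset.mem_univ, true_and] at hk
    have h1 : χ ≤ lam k := habove k hk
    have h2 : 1 / lam k ≤ 1 / χ := one_div_le_one_div_of_le hχ h1
    have : 0 ≤ 1 / χ - 1 / lam k := by linarith
    positivity
  have hPidealnn : 0 ≤ Pideal := by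
    rw [hPideal]
    exact Finset.sum_nonneg hIdealnn
  have hcardF : (F.card : ℝ) ≤ (s : ℝ) := by
    have : F.card ≤ s := by
      calc F.card ≤ (Finset.range s).card := by
            refine Finset.card_le_card_of_injOn (fun k => (k : ℕ)) ?_ ?_
            · intro k hk
              simp only [hF, Finset.mem_coe, Finset.mem_filter, Finset.mem_univ, true_and] at hk
              exact Finset.mem_range.mpr hk.1
            · intro x _ y _ h
              exact Fin.val_injective h
        _ = s := Finset.card_range s
    exact_mod_cast this
  have hspos : (0 : ℝ) < (s : ℝ) := by exact_mod_cast hs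
  have hcpos : (0 : ℝ) < 19 / 48 * (σ ^ 2 / χ) := by positivity
  have h323 : (323 : ℝ) / 816 = 19 / 48 := by norm_num
  rw [h323]
  rcases F.eq_empty_or_nonempty with hFe | hFne
  · rw [hPmismatch, hFe, Finset.sum_empty]
    nlinarith
  · have hstep : Pmismatch <
        ∑ k ∈ F, (σ ^ 2 * (1 / χ - 1 / lam k) + 19 / 48 * (σ ^ 2 / χ)) := by
      rw [hPmismatch]
      refine Finset.sum_lt_sum_of_nonempty hFne fun k hk => ?_
      simp only [hF, Finset.mem_filter, Finset.mem_univ, true_and] at hk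
      exact stmt10_key_ineq σ χ δ0 δs (lam k) (lamhat k) hσ hχ hδ016 hδs0 hδs4
        (habove k hk.1) (hweyl k) hk.2
    have hsplit2 : ∑ k ∈ F, (σ ^ 2 * (1 / χ - 1 / lam k) + 19 / 48 * (σ ^ 2 / χ))
        = (∑ k ∈ F, σ ^ 2 * (1 / χ - 1 / lam k)) + F.card * (19 / 48 * (σ ^ 2 / χ)) := by
      rw [Finset.sum_add_distrib, Finset.sum_const, nsmul_eq_mul]
    have hsum_le : (∑ k ∈ F, σ ^ 2 * (1 / χ - 1 / lam k)) ≤ Pideal := by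
      rw [hPideal]
      exact Finset.sum_le_sum_of_subset_of_nonneg hFsub fun k hk _ => hIdealnn k hk
    have hcard_le : (F.card : ℝ) * (19 / 48 * (σ ^ 2 / χ)) ≤
        (s : ℝ) * (19 / 48 * (σ ^ 2 / χ)) :=
      mul_le_mul_of_nonneg_right hcardF hcpos.le
    calc Pmismatch < ∑ k ∈ F, (σ ^ 2 * (1 / χ - 1 / lam k) + 19 / 48 * (σ ^ 2 / χ)) := hstep
      _ = (∑ k ∈ F, σ ^ 2 * (1 / χ - 1 / lam k)) + F.card * (19 / 48 * (σ ^ 2 / χ)) := hsplit2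
      _ ≤ Pideal + (s : ℝ) * (19 / 48 * (σ ^ 2 / χ)) := add_le_add hsum_le hcard_le
      _ = Pideal + 19 / 48 * (σ ^ 2 / χ) * s := by ring
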